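/- Let G be a finite group and a ∈ G. Every generator of ⟨a⟩ other than a itself is a closed twin of a in the power graph of G. In particular, φ(ord(a)) ≤ N_a, where N_a is one plus the number of closed twins of a. -/

import Mathlib

def padj {G : Type*} [Group G] (a b : G) : Prop :=
  a ≠ b ∧ (Subgroup.zpowers a ≤ Subgroup.zpowers b ∨ Subgroup.zpowers b ≤ Subgroup.zpowers a)

def pnbhd {G : Type*} [Group G] (a : G) : Set G := {x | padj a x}

def closedTwins {G : Type*} [Group G] (a : G) : Set G :=
  {b | padj a b ∧ pnbhd a \ {b} = pnbhd b \ {a}}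

noncomputable def Ncount {G : Type*} [Group G] (a : G) : ℕ := (closedTwins a).ncard + 1

def eadj {G : Type*} [Group G] (a b : G) : Prop :=
  a ≠ b ∧ ∃ c : G, a ∈ Subgroup.zpowers c ∧ b ∈ Subgroup.zpowers c

theorem gen_sub_twins {G : Type*} [Group G] (a : G) :
    {b : G | Subgroup.zpowers b = Subgroup.zpowers a} \ {a} ⊆ closedTwins a := by
  rintro b ⟨hb, hba⟩
  simp only [Set.mem_setOf_eq] at hb
  simp only [Set.mem_singleton_iff] at hba
  refine ⟨⟨fun h => hba h.symm, Or.inl hb.symm.le⟩, ?_⟩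
  ext x
  simp only [Set.mem_diff, Set.mem_singleton_iff, pnbhd, padj, Set.mem_setOf_eq]
  constructor
  · rintro ⟨⟨hax, hle⟩, hxb⟩
    refine ⟨⟨fun h => hxb h.symm, by rw [hb]; exact hle⟩, fun h => hax h.symm⟩
  · rintro ⟨⟨hbx, hle⟩, hxa⟩
    rw [hb] at hle
    exact ⟨⟨fun h => hxa h.symm, hle⟩, fun h => hbx h.symm⟩

theorem card_gens {G : Type*} [Group G] [Finite G] (a : G) :
    {b : G | Subgroup.zpowers b = Subgroup.zpowers a}.ncard = Nat.totient (orderOf a) := by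
  classical
  set H := Subgroup.zpowers a with hH
  haveI : Fintype H := Fintype.ofFinite H
  haveI : IsCyclic H := ⟨⟨⟨a, Subgroup.mem_zpowers a⟩, fun x => by
    obtain ⟨k, hk⟩ := x.2
    exact ⟨k, Subtype.ext hk⟩⟩⟩
  have hset : {b : G | Subgroup.zpowers b = Subgroup.zpowers a} =
      Subtype.val '' {b : H | orderOf b = orderOf a} := by
    ext b
    simp only [Set.mem_setOf_eq, Set.mem_image]
    constructor
    · intro hb
      have hbH : b ∈ H := by rw [hH, ← hb]; exact Subgroup.mem_zpowers b
      refine ⟨⟨b, hbH⟩, ?_, rfl⟩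
      simp only [Set.mem_setOf_eq, Subgroup.orderOf_mk]
      rw [← Nat.card_zpowers, ← Nat.card_zpowers, hb]
    · rintro ⟨⟨b, hbH⟩, hb, rfl⟩
      simp only [Set.mem_setOf_eq, Subgroup.orderOf_mk] at hb
      have hle : Subgroup.zpowers b ≤ H := (Subgroup.zpowers_le).mpr hbH
      exact Subgroup.eq_of_le_of_card_ge hle
        (by rw [Nat.card_zpowers, Nat.card_zpowers, hb])
  rw [hset, Set.ncard_image_of_injective _ Subtype.val_injective]
  have hcard : Fintype.card H = orderOf a := by
    rw [← Nat.card_eq_fintype_card, hH, Nat.card_zpowers]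
  have := IsCyclic.card_orderOf_eq_totient (α := H) (d := orderOf a)
    (by rw [hcard])
  rw [← this, Set.ncard_eq_toFinset_card', Set.toFinset_setOf]

theorem stmt4 {G : Type*} [Group G] [Finite G] (a : G) :
    ({b : G | Subgroup.zpowers b = Subgroup.zpowers a} \ {a} ⊆ closedTwins a) ∧
      Nat.totient (orderOf a) ≤ Ncount a := by
  refine ⟨gen_sub_twins a, ?_⟩
  have hsub := gen_sub_twins a
  have hfin : ({b : G | Subgroup.zpowers b = Subgroup.zpowers a} \ {a}).Finite :=
    Set.toFinite _
  have h1 : ({b : G | Subgroup.zpowers b = Subgroup.zpowers a} \ {a}).ncard ≤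
      (closedTwins a).ncard := Set.ncard_le_ncard hsub (Set.toFinite _)
  have ha : a ∈ {b : G | Subgroup.zpowers b = Subgroup.zpowers a} := rfl
  have h2 : {b : G | Subgroup.zpowers b = Subgroup.zpowers a}.ncard ≤
      ({b : G | Subgroup.zpowers b = Subgroup.zpowers a} \ {a}).ncard + 1 := by
    rw [Set.ncard_diff_singleton_of_mem ha]
    have : 0 < {b : G | Subgroup.zpowers b = Subgroup.zpowers a}.ncard :=
      (Set.ncard_pos (Set.toFinite _)).mpr ⟨a, ha⟩
    omega
  calc Nat.totient (orderOf a) = _ := (card_gens a).symm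
    _ ≤ _ := h2
    _ ≤ Ncount a := by unfold Ncount; omega
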